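/- For every integer n ≥ 2 and every field K, there exist a matrix N ∈ Mat_n(K) of rank n−1 and a linear subspace S of Mat_n(K) of codimension exactly n−1 such that for every A ∈ S some matrix in A + K·N is singular (has rank < n). -/

import Mathlib

theorem stmt5 (K : Type*) [Field K] (n : ℕ) (hn : 2 ≤ n) :
    ∃ (N : Matrix (Fin n) (Fin n) K) (S : Submodule K (Matrix (Fin n) (Fin n) K)),
      N.rank = n - 1 ∧ Module.finrank K S + (n - 1) = n * n ∧
      ∀ A ∈ S, ∃ lam : K, ¬ IsUnit (A + lam • N) := by
  classical
  obtain ⟨m, rfl⟩ : ∃ m, n = m + 1 := ⟨n - 1, (Nat.succ_pred_eq_of_pos (by omega)).symm⟩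
  set n := m + 1
  have hm : 1 ≤ m := by omega
  -- N = diagonal with 0 at the last index, 1 elsewhere
  set w : Fin n → K := fun i => if i = Fin.last m then 0 else 1 with hw
  set N : Matrix (Fin n) (Fin n) K := Matrix.diagonal w with hN
  -- φ : extract the off-corner entries of column 0
  let φ : Matrix (Fin n) (Fin n) K →ₗ[K] ({i : Fin n // i ≠ 0} → K) :=
    { toFun := fun A i => A i.1 0
      map_add' := fun _ _ => rfl
      map_smul' := fun _ _ => rfl }
  refine ⟨N, LinearMap.ker φ, ?_, ?_, ?_⟩
  · rw [hN, Matrix.rank_diagonal]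
    have : ∀ i : Fin n, w i ≠ 0 ↔ ¬ (i = Fin.last m) := by
      intro i; rw [hw]; by_cases h : i = Fin.last m <;> simp [h]
    rw [Fintype.card_congr (Equiv.subtypeEquivRight this),
      Fintype.card_subtype_compl, Fintype.card_subtype_eq, Fintype.card_fin]
  · have hsurj : Function.Surjective φ := by
      intro v
      refine ⟨Matrix.of fun i j => if h : i ≠ 0 ∧ j = 0 then v ⟨i, h.1⟩ else 0, ?_⟩
      funext i
      exact dif_pos ⟨i.2, rfl⟩
    have h1 := LinearMap.finrank_range_add_finrank_ker φ
    rw [LinearMap.range_eq_top.mpr hsurj, finrank_top] at h1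
    have h2 : Module.finrank K ({i : Fin n // i ≠ 0} → K) = m := by
      rw [Module.finrank_pi, Fintype.card_subtype_compl, Fintype.card_subtype_eq,
        Fintype.card_fin]
      omega
    have h3 : Module.finrank K (Matrix (Fin n) (Fin n) K) = n * n := by
      rw [Module.finrank_matrix, Fintype.card_fin, Module.finrank_self, mul_one]
    rw [h2, h3] at h1
    omega
  · intro A hA
    refine ⟨-A 0 0, ?_⟩
    rw [Matrix.isUnit_iff_isUnit_det]
    have hdet : (A + (-A 0 0) • N).det = 0 := by
      apply Matrix.det_eq_zero_of_column_eq_zero 0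
      intro i
      by_cases hi : i = 0
      · subst hi
        have h0 : (0 : Fin n) ≠ Fin.last m := by
          intro h; have := congrArg Fin.val h; simp [Fin.val_last] at this; omega
        simp [N, Matrix.diagonal, hw, h0]
      · have hAi : A i 0 = 0 := by
          have := congrFun (LinearMap.mem_ker.mp hA) ⟨i, hi⟩
          exact this
        simp [N, Matrix.diagonal_apply_ne _ hi, hAi]
    rw [hdet]
    simp
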